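/- Let R = Sym(V), Q = Frac(R), s ∈ S, and B_s = R ⊗_{R^s} R. Choose δ_s ∈ V with ⟨α_s^∨, δ_s⟩ = 1. Then in B_s ⊗_R Q: the elements δ_s ⊗ 1 − 1 ⊗ s(δ_s) and δ_s ⊗ 1 − 1 ⊗ δ_s span complementary Q-subbimodules, B_s ⊗_R Q = Q·(δ_s⊗1 − 1⊗s(δ_s)) ⊕ Q·(δ_s⊗1 − 1⊗δ_s), on which the right R-action equals the left action twisted by e and by s respectively (i.e. m·f = f·m on the first summand and m·f = s(f)·m on the second). -/

import Mathlib

open scoped TensorProduct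

/-- The embedding of `V = K^n` as the degree-one part of `R = Sym(V) = K[X₁,…,Xₙ]`. -/
noncomputable def linP {K : Type} [CommRing K] {n : ℕ} (v : Fin n → K) :
    MvPolynomial (Fin n) K :=
  ∑ i, MvPolynomial.C (v i) * MvPolynomial.X i

/-- The extension of the `W`-action on `V` to `R = Sym(V)` by algebra maps. -/
noncomputable def actR {K W : Type} [CommRing K] [Group W] {n : ℕ}
    (π : Representation K W (Fin n → K)) (w : W) :
    MvPolynomial (Fin n) K →ₐ[K] MvPolynomial (Fin n) K :=
  MvPolynomial.aeval fun i => linP (π w (Pi.single i 1))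

/-- The subalgebra `R^s` of `s`-invariants. -/
noncomputable def invs {K W : Type} [CommRing K] [Group W] {n : ℕ}
    (π : Representation K W (Fin n → K)) (s : W) : Subalgebra K (MvPolynomial (Fin n) K) :=
  AlgHom.equalizer (actR π s) (AlgHom.id K (MvPolynomial (Fin n) K))

noncomputable instance invsFracAlgebra {K W : Type} [CommRing K] [Group W] {n : ℕ}
    (π : Representation K W (Fin n → K)) (s : W) :
    Algebra ↥(invs π s) (FractionRing (MvPolynomial (Fin n) K)) :=
  ((algebraMap (MvPolynomial (Fin n) K) (FractionRing (MvPolynomial (Fin n) K))).comp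
    (algebraMap ↥(invs π s) (MvPolynomial (Fin n) K))).toAlgebra

/-- Right multiplication by `q` on the second factor of `Q ⊗_{R^s} Q`. -/
noncomputable def rmulQ {K W : Type} [CommRing K] [IsDomain K] [Group W] {n : ℕ}
    (π : Representation K W (Fin n → K)) (s : W)
    (q : FractionRing (MvPolynomial (Fin n) K)) :
    (FractionRing (MvPolynomial (Fin n) K) ⊗[↥(invs π s)]
        FractionRing (MvPolynomial (Fin n) K)) →ₗ[↥(invs π s)]
      (FractionRing (MvPolynomial (Fin n) K) ⊗[↥(invs π s)]
        FractionRing (MvPolynomial (Fin n) K)) :=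
  LinearMap.lTensor _ (LinearMap.mulLeft ↥(invs π s) q)

open MvPolynomial

section aux
variable {K : Type} [CommRing K] {n : ℕ}

lemma linP_add (v w : Fin n → K) : linP (v + w) = linP v + linP w := by
  simp [linP, add_mul, Finset.sum_add_distrib]

lemma linP_smul (c : K) (v : Fin n → K) : linP (c • v) = C c * linP v := by
  simp [linP, Finset.mul_sum, mul_assoc]

lemma linP_neg (v : Fin n → K) : linP (-v) = - linP v := by
  simp [linP, Finset.sum_neg_distrib]

lemma linP_sub (v w : Fin n → K) : linP (v - w) = linP v - linP w := by
  rw [sub_eq_add_neg, linP_add, linP_neg, sub_eq_add_neg]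

lemma linP_single (j : Fin n) : linP (Pi.single j (1:K)) = X j := by
  rw [linP, Finset.sum_eq_single j]
  · simp
  · intro k _ hk; simp [Pi.single_eq_of_ne hk]
  · simp

lemma eval_single_linP (v : Fin n → K) (j : Fin n) :
    eval (Pi.single j (1:K)) (linP v) = v j := by
  simp [linP, Pi.single_apply]

lemma linP_ne_zero {v : Fin n → K} (hv : v ≠ 0) : linP v ≠ 0 := by
  intro h
  apply hv
  funext j
  have := eval_single_linP v j
  rw [h, map_zero] at this
  simp [← this]

variable {W : Type} [Group W] (π : Representation K W (Fin n → K))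

lemma actR_C (w : W) (c : K) : actR π w (C c) = C c := by
  simp [actR, algebraMap_eq]

lemma actR_X (w : W) (j : Fin n) : actR π w (X j) = linP (π w (Pi.single j 1)) := by
  simp [actR]

noncomputable def linPL : (Fin n → K) →ₗ[K] MvPolynomial (Fin n) K where
  toFun := linP
  map_add' := linP_add
  map_smul' := by intro c v; simp [linP_smul, smul_eq_C_mul]

lemma actR_linP (w : W) (v : Fin n → K) : actR π w (linP v) = linP (π w v) := by
  have h1 : actR π w (linP v) = ∑ j, C (v j) * linP (π w (Pi.single j 1)) := by
    rw [linP, map_sum]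
    refine Finset.sum_congr rfl fun j _ => ?_
    rw [map_mul, actR_C, actR_X]
  have h2 : v = ∑ j, v j • (Pi.single j 1 : Fin n → K) := by
    funext k; simp [Pi.single_apply]
  have h3 : linP (π w v) = ∑ j, C (v j) * linP (π w (Pi.single j 1)) := by
    conv_lhs => rw [show π w v = π w (∑ j, v j • (Pi.single j 1 : Fin n → K)) from by
      rw [← h2]]
    rw [map_sum]
    show linPL _ = _
    rw [map_sum]
    refine Finset.sum_congr rfl fun j _ => ?_
    rw [map_smul, map_smul]
    show v j • linP (π w (Pi.single j 1)) = _
    rw [smul_eq_C_mul]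
  rw [h1, h3]

lemma actR_comp (w w' : W) (p : MvPolynomial (Fin n) K) :
    actR π w (actR π w' p) = actR π (w * w') p := by
  induction p using MvPolynomial.induction_on with
  | C c => rw [actR_C, actR_C, actR_C]
  | add p q hp hq => rw [map_add, map_add, map_add, hp, hq]
  | mul_X p j hp =>
      rw [map_mul, map_mul, map_mul, hp, actR_X, actR_linP, actR_X]
      rw [show π w (π w' (Pi.single j 1)) = π (w * w') (Pi.single j 1) from ?_]
      rw [map_mul]
      rfl

lemma actR_one (p : MvPolynomial (Fin n) K) : actR π 1 p = p := by
  have : actR π 1 = MvPolynomial.aeval X := by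
    unfold actR
    congr 1
    funext i
    rw [map_one]
    show linP (Pi.single i 1) = X i
    exact linP_single i
  rw [this, aeval_X_left_apply]
end aux

section key
open TensorProduct

set_option maxHeartbeats 1600000 in
set_option synthInstance.maxHeartbeats 800000 in
theorem key13 {K W : Type} [CommRing K] [IsDomain K] [Group W] {n : ℕ}
    (π : Representation K W (Fin n → K)) (s : W) (hss : s * s = 1)
    (α0 : Fin n → K) (cα0 : (Fin n → K) →ₗ[K] K)
    (hrefl0 : ∀ v, π s v = v - cα0 v • α0)
    (h20 : cα0 α0 = 2) (hα0ne : α0 ≠ 0)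
    (δ : Fin n → K) (hδ0 : cα0 δ = 1) :
    (∀ m : FractionRing (MvPolynomial (Fin n) K) ⊗[↥(invs π s)]
        FractionRing (MvPolynomial (Fin n) K),
      ∃! c : FractionRing (MvPolynomial (Fin n) K) × FractionRing (MvPolynomial (Fin n) K),
        m = c.1 • (algebraMap (MvPolynomial (Fin n) K) (FractionRing (MvPolynomial (Fin n) K))
                (linP δ) ⊗ₜ 1
              - 1 ⊗ₜ algebraMap (MvPolynomial (Fin n) K) (FractionRing (MvPolynomial (Fin n) K))
                (actR π s (linP δ)))
          + c.2 • (algebraMap (MvPolynomial (Fin n) K) (FractionRing (MvPolynomial (Fin n) K))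
                (linP δ) ⊗ₜ 1
              - 1 ⊗ₜ algebraMap (MvPolynomial (Fin n) K) (FractionRing (MvPolynomial (Fin n) K))
                (linP δ))) ∧
      (∀ f : MvPolynomial (Fin n) K,
        rmulQ π s (algebraMap (MvPolynomial (Fin n) K) (FractionRing (MvPolynomial (Fin n) K)) f)
            (algebraMap (MvPolynomial (Fin n) K) (FractionRing (MvPolynomial (Fin n) K))
                (linP δ) ⊗ₜ 1
              - 1 ⊗ₜ algebraMap (MvPolynomial (Fin n) K) (FractionRing (MvPolynomial (Fin n) K))
                (actR π s (linP δ)))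
          = algebraMap (MvPolynomial (Fin n) K) (FractionRing (MvPolynomial (Fin n) K)) f •
            (algebraMap (MvPolynomial (Fin n) K) (FractionRing (MvPolynomial (Fin n) K))
                (linP δ) ⊗ₜ 1
              - 1 ⊗ₜ algebraMap (MvPolynomial (Fin n) K) (FractionRing (MvPolynomial (Fin n) K))
                (actR π s (linP δ))) ∧
        rmulQ π s (algebraMap (MvPolynomial (Fin n) K) (FractionRing (MvPolynomial (Fin n) K)) f)
            (algebraMap (MvPolynomial (Fin n) K) (FractionRing (MvPolynomial (Fin n) K))
                (linP δ) ⊗ₜ 1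
              - 1 ⊗ₜ algebraMap (MvPolynomial (Fin n) K) (FractionRing (MvPolynomial (Fin n) K))
                (linP δ))
          = algebraMap (MvPolynomial (Fin n) K) (FractionRing (MvPolynomial (Fin n) K))
              (actR π s f) •
            (algebraMap (MvPolynomial (Fin n) K) (FractionRing (MvPolynomial (Fin n) K))
                (linP δ) ⊗ₜ 1
              - 1 ⊗ₜ algebraMap (MvPolynomial (Fin n) K) (FractionRing (MvPolynomial (Fin n) K))
                (linP δ))) := by
  classical
  have hsα : π s α0 = -α0 := by
    rw [hrefl0, h20]
    funext j
    simp only [Pi.sub_apply, Pi.smul_apply, smul_eq_mul, Pi.neg_apply]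
    ring
  have hsδ : π s δ = δ - α0 := by rw [hrefl0, hδ0, one_smul]
  have hsδR : actR π s (linP δ) = linP δ - linP α0 := by
    rw [actR_linP, hsδ, linP_sub]
  have hsαR : actR π s (linP α0) = -(linP α0) := by
    rw [actR_linP, hsα, linP_neg]
  have hinv : ∀ p : MvPolynomial (Fin n) K, actR π s (actR π s p) = p := by
    intro p; rw [actR_comp, hss, actR_one]
  have hαR : linP α0 ≠ 0 := linP_ne_zero hα0ne
  have hdvd : ∀ p : MvPolynomial (Fin n) K, linP α0 ∣ (p - actR π s p) := by
    intro p
    induction p using MvPolynomial.induction_on with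
    | C c => rw [actR_C, sub_self]; exact dvd_zero _
    | add p q hp hq =>
        rw [map_add, show p + q - (actR π s p + actR π s q)
          = (p - actR π s p) + (q - actR π s q) by ring]
        exact dvd_add hp hq
    | mul_X p j hp =>
        obtain ⟨v, hv⟩ := hp
        refine ⟨v * MvPolynomial.X j
          + actR π s p * MvPolynomial.C (cα0 (Pi.single j 1)), ?_⟩
        rw [map_mul, actR_X, hrefl0, linP_sub, linP_smul, linP_single]
        linear_combination (MvPolynomial.X j : MvPolynomial (Fin n) K) * hv
  have hdecomp : ∀ p : MvPolynomial (Fin n) K, ∃ u v : MvPolynomial (Fin n) K,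
      actR π s u = u ∧ actR π s v = v ∧ p = u + linP δ * v := by
    intro p
    obtain ⟨v, hv⟩ := hdvd p
    have hvinv : actR π s v = v := by
      have h1 : actR π s p - p = actR π s (linP α0) * actR π s v := by
        rw [← map_mul, ← hv, map_sub, hinv]
      rw [hsαR, neg_mul] at h1
      have h2 : linP α0 * actR π s v = linP α0 * v := by
        linear_combination h1 + hv
      exact mul_left_cancel₀ hαR h2
    refine ⟨p - linP δ * v, v, ?_, hvinv, by ring⟩
    rw [map_sub, map_mul, hsδR, hvinv]
    linear_combination -hv
  -- fraction field setup
  have hφinj : Function.Injective (algebraMap (MvPolynomial (Fin n) K) (FractionRing (MvPolynomial (Fin n) K))) :=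
    IsFractionRing.injective _ _
  have hsinj : Function.Injective (actR π s) := fun x y h => by
    rw [← hinv x, h, hinv]
  have hle : nonZeroDivisors (MvPolynomial (Fin n) K) ≤
      Submonoid.comap ((actR π s : MvPolynomial (Fin n) K →ₐ[K] MvPolynomial (Fin n) K) : MvPolynomial (Fin n) K →+* MvPolynomial (Fin n) K)
        (nonZeroDivisors (MvPolynomial (Fin n) K)) := by
    intro x hx
    simp only [Submonoid.mem_comap]
    rw [mem_nonZeroDivisors_iff_ne_zero] at hx ⊢
    intro h
    apply hx
    apply hsinj
    rw [map_zero]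
    exact h
  set sQ : FractionRing (MvPolynomial (Fin n) K) →+* FractionRing (MvPolynomial (Fin n) K) :=
    IsLocalization.map (M := nonZeroDivisors (MvPolynomial (Fin n) K)) (T := nonZeroDivisors (MvPolynomial (Fin n) K)) (FractionRing (MvPolynomial (Fin n) K))
      ((actR π s : MvPolynomial (Fin n) K →ₐ[K] MvPolynomial (Fin n) K) : MvPolynomial (Fin n) K →+* MvPolynomial (Fin n) K) hle with hsQdef
  have hsQφ : ∀ p : MvPolynomial (Fin n) K, sQ (algebraMap (MvPolynomial (Fin n) K) (FractionRing (MvPolynomial (Fin n) K)) p)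
      = algebraMap (MvPolynomial (Fin n) K) (FractionRing (MvPolynomial (Fin n) K)) (actR π s p) := by
    intro p
    exact IsLocalization.map_eq hle p
  -- the `A`-module structure on `Q`
  have hsmulA : ∀ (u : ↥(invs π s)) (x : FractionRing (MvPolynomial (Fin n) K)),
      u • x = algebraMap (MvPolynomial (Fin n) K) (FractionRing (MvPolynomial (Fin n) K)) (u : MvPolynomial (Fin n) K) * x := by
    intro u x
    have h1 : u • x = (u : MvPolynomial (Fin n) K) • x := rfl
    rw [h1, ← algebraMap_smul (FractionRing (MvPolynomial (Fin n) K)) (u : MvPolynomial (Fin n) K) x, smul_eq_mul]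
  have hsQA : ∀ u : ↥(invs π s), sQ (algebraMap (MvPolynomial (Fin n) K) (FractionRing (MvPolynomial (Fin n) K)) (u : MvPolynomial (Fin n) K))
      = algebraMap (MvPolynomial (Fin n) K) (FractionRing (MvPolynomial (Fin n) K)) (u : MvPolynomial (Fin n) K) := by
    intro u
    rw [hsQφ]
    congr 1
    exact u.2
  -- the two functionals
  set μ : (FractionRing (MvPolynomial (Fin n) K)) ⊗[↥(invs π s)] (FractionRing (MvPolynomial (Fin n) K)) →ₗ[↥(invs π s)] FractionRing (MvPolynomial (Fin n) K) :=
    TensorProduct.lift (LinearMap.mk₂ (↥(invs π s)) (fun x y => x * y)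
      (fun x x' y => add_mul x x' y)
      (by
        intro u x y
        rw [hsmulA, hsmulA, mul_assoc])
      (fun x y y' => mul_add x y y')
      (by
        intro u x y
        rw [hsmulA, hsmulA]
        ring)) with hμdef
  set μs : (FractionRing (MvPolynomial (Fin n) K)) ⊗[↥(invs π s)] (FractionRing (MvPolynomial (Fin n) K)) →ₗ[↥(invs π s)] FractionRing (MvPolynomial (Fin n) K) :=
    TensorProduct.lift (LinearMap.mk₂ (↥(invs π s)) (fun x y => x * sQ y)
      (fun x x' y => add_mul x x' (sQ y))
      (by
        intro u x y
        rw [hsmulA, hsmulA, mul_assoc])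
      (by
        intro x y y'
        rw [map_add, mul_add])
      (by
        intro u x y
        rw [hsmulA, hsmulA, map_mul, hsQA]
        ring)) with hμsdef
  have hμ : ∀ x y : FractionRing (MvPolynomial (Fin n) K), μ (x ⊗ₜ[↥(invs π s)] y) = x * y := by
    intro x y
    rw [hμdef]
    exact TensorProduct.lift.tmul x y
  have hμs : ∀ x y : FractionRing (MvPolynomial (Fin n) K), μs (x ⊗ₜ[↥(invs π s)] y) = x * sQ y := by
    intro x y
    rw [hμsdef]
    exact TensorProduct.lift.tmul x y
  have hμsmul : ∀ (q : FractionRing (MvPolynomial (Fin n) K)) (m : (FractionRing (MvPolynomial (Fin n) K)) ⊗[↥(invs π s)] (FractionRing (MvPolynomial (Fin n) K))), μ (q • m) = q * μ m := by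
    intro q m
    induction m using TensorProduct.induction_on with
    | zero => rw [smul_zero, map_zero, mul_zero]
    | tmul x y => rw [TensorProduct.smul_tmul', smul_eq_mul, hμ, hμ, mul_assoc]
    | add x y hx hy => rw [smul_add, map_add, map_add, mul_add, hx, hy]
  have hμssmul : ∀ (q : FractionRing (MvPolynomial (Fin n) K)) (m : (FractionRing (MvPolynomial (Fin n) K)) ⊗[↥(invs π s)] (FractionRing (MvPolynomial (Fin n) K))), μs (q • m) = q * μs m := by
    intro q m
    induction m using TensorProduct.induction_on with
    | zero => rw [smul_zero, map_zero, mul_zero]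
    | tmul x y => rw [TensorProduct.smul_tmul', smul_eq_mul, hμs, hμs, mul_assoc]
    | add x y hx hy => rw [smul_add, map_add, map_add, mul_add, hx, hy]
  -- names for the key elements
  set δQ : FractionRing (MvPolynomial (Fin n) K) := algebraMap (MvPolynomial (Fin n) K) (FractionRing (MvPolynomial (Fin n) K)) (linP δ) with hδQ
  set sδQ : FractionRing (MvPolynomial (Fin n) K) := algebraMap (MvPolynomial (Fin n) K) (FractionRing (MvPolynomial (Fin n) K)) (actR π s (linP δ)) with hsδQ
  set αQ : FractionRing (MvPolynomial (Fin n) K) := algebraMap (MvPolynomial (Fin n) K) (FractionRing (MvPolynomial (Fin n) K)) (linP α0) with hαQdef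
  have hαQ : δQ - sδQ = αQ := by
    rw [hδQ, hsδQ, hαQdef, hsδR, map_sub]
    ring
  have hαQne : αQ ≠ 0 := by
    rw [hαQdef]
    intro h
    exact hαR (hφinj (by rw [h, map_zero]))
  have hsQδ : sQ δQ = sδQ := by rw [hδQ, hsQφ, hsδQ]
  have hsQsδ : sQ sδQ = δQ := by rw [hsδQ, hsQφ, hinv, hδQ]
  set aa : (FractionRing (MvPolynomial (Fin n) K)) ⊗[↥(invs π s)] (FractionRing (MvPolynomial (Fin n) K)) := δQ ⊗ₜ 1 - 1 ⊗ₜ sδQ with haa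
  set bb : (FractionRing (MvPolynomial (Fin n) K)) ⊗[↥(invs π s)] (FractionRing (MvPolynomial (Fin n) K)) := δQ ⊗ₜ 1 - 1 ⊗ₜ δQ with hbb
  have hμa : μ aa = αQ := by
    rw [haa, map_sub, hμ, hμ, mul_one, one_mul, hαQ]
  have hμb : μ bb = 0 := by
    rw [hbb, map_sub, hμ, hμ, mul_one, one_mul, sub_self]
  have hμsa : μs aa = 0 := by
    rw [haa, map_sub, hμs, hμs, map_one, mul_one, one_mul, hsQsδ, sub_self]
  have hμsb : μs bb = αQ := by
    rw [hbb, map_sub, hμs, hμs, map_one, mul_one, one_mul, hsQδ, hαQ]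
  -- moving invariant elements across the tensor
  have hmove : ∀ (p : MvPolynomial (Fin n) K) (hp : actR π s p = p) (y : FractionRing (MvPolynomial (Fin n) K)),
      (1 : FractionRing (MvPolynomial (Fin n) K)) ⊗ₜ[↥(invs π s)] (algebraMap (MvPolynomial (Fin n) K) (FractionRing (MvPolynomial (Fin n) K)) p * y)
        = algebraMap (MvPolynomial (Fin n) K) (FractionRing (MvPolynomial (Fin n) K)) p • ((1 : FractionRing (MvPolynomial (Fin n) K)) ⊗ₜ[↥(invs π s)] y) := by
    intro p hp y
    have h1 : algebraMap (MvPolynomial (Fin n) K) (FractionRing (MvPolynomial (Fin n) K)) p * y = (⟨p, hp⟩ : ↥(invs π s)) • y := (hsmulA ⟨p, hp⟩ y).symm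
    rw [h1, TensorProduct.tmul_smul, TensorProduct.smul_tmul',
      TensorProduct.smul_tmul', hsmulA, smul_eq_mul]
  -- the span of aa and bb
  have hu1 : (1 : FractionRing (MvPolynomial (Fin n) K)) ⊗ₜ[↥(invs π s)] (1 : FractionRing (MvPolynomial (Fin n) K))
      ∈ Submodule.span (FractionRing (MvPolynomial (Fin n) K)) {aa, bb} := by
    have he : actR π s (linP δ + actR π s (linP δ)) = linP δ + actR π s (linP δ) := by
      rw [map_add, hinv]
      ring
    have h1 : (1 : FractionRing (MvPolynomial (Fin n) K)) ⊗ₜ[↥(invs π s)] (sδQ + δQ) = (sδQ + δQ) ⊗ₜ[↥(invs π s)] (1 : FractionRing (MvPolynomial (Fin n) K)) := by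
      have h2 := hmove (linP δ + actR π s (linP δ)) he 1
      rw [mul_one] at h2
      have h3 : sδQ + δQ = algebraMap (MvPolynomial (Fin n) K) (FractionRing (MvPolynomial (Fin n) K)) (linP δ + actR π s (linP δ)) := by
        rw [map_add, hδQ, hsδQ]
        ring
      rw [h3, h2, TensorProduct.smul_tmul', smul_eq_mul, mul_one]
    have haab : aa + bb = αQ • ((1 : FractionRing (MvPolynomial (Fin n) K)) ⊗ₜ[↥(invs π s)] (1 : FractionRing (MvPolynomial (Fin n) K))) := by
      rw [haa, hbb, TensorProduct.smul_tmul', smul_eq_mul, mul_one]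
      calc δQ ⊗ₜ[↥(invs π s)] 1 - 1 ⊗ₜ[↥(invs π s)] sδQ + (δQ ⊗ₜ[↥(invs π s)] 1 - 1 ⊗ₜ[↥(invs π s)] δQ)
          = (δQ + δQ) ⊗ₜ[↥(invs π s)] (1 : FractionRing (MvPolynomial (Fin n) K)) - (1 : FractionRing (MvPolynomial (Fin n) K)) ⊗ₜ[↥(invs π s)] (sδQ + δQ) := by
            rw [TensorProduct.add_tmul, TensorProduct.tmul_add]
            abel
        _ = (δQ + δQ) ⊗ₜ[↥(invs π s)] (1 : FractionRing (MvPolynomial (Fin n) K)) - (sδQ + δQ) ⊗ₜ[↥(invs π s)] (1 : FractionRing (MvPolynomial (Fin n) K)) := by rw [h1]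
        _ = (δQ + δQ - (sδQ + δQ)) ⊗ₜ[↥(invs π s)] (1 : FractionRing (MvPolynomial (Fin n) K)) := by
            rw [TensorProduct.sub_tmul]
        _ = αQ ⊗ₜ[↥(invs π s)] (1 : FractionRing (MvPolynomial (Fin n) K)) := by rw [show δQ + δQ - (sδQ + δQ) = δQ - sδQ by ring, hαQ]
    have h4 : (1 : FractionRing (MvPolynomial (Fin n) K)) ⊗ₜ[↥(invs π s)] (1 : FractionRing (MvPolynomial (Fin n) K)) = αQ⁻¹ • (aa + bb) := by
      rw [haab, smul_smul, inv_mul_cancel₀ hαQne, one_smul]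
    rw [h4]
    exact Submodule.smul_mem _ _ (Submodule.add_mem _
      (Submodule.subset_span (by simp)) (Submodule.subset_span (by simp)))
  have hw1 : (1 : FractionRing (MvPolynomial (Fin n) K)) ⊗ₜ[↥(invs π s)] δQ ∈ Submodule.span (FractionRing (MvPolynomial (Fin n) K)) {aa, bb} := by
    have h5 : (1 : FractionRing (MvPolynomial (Fin n) K)) ⊗ₜ[↥(invs π s)] δQ = δQ • ((1 : FractionRing (MvPolynomial (Fin n) K)) ⊗ₜ[↥(invs π s)] (1 : FractionRing (MvPolynomial (Fin n) K))) - bb := by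
      rw [hbb, TensorProduct.smul_tmul', smul_eq_mul, mul_one]
      abel
    rw [h5]
    exact Submodule.sub_mem _ (Submodule.smul_mem _ _ hu1) (Submodule.subset_span (by simp))
  have hR0 : ∀ p : MvPolynomial (Fin n) K, (1 : FractionRing (MvPolynomial (Fin n) K)) ⊗ₜ[↥(invs π s)] (algebraMap (MvPolynomial (Fin n) K) (FractionRing (MvPolynomial (Fin n) K)) p)
      ∈ Submodule.span (FractionRing (MvPolynomial (Fin n) K)) {aa, bb} := by
    intro p
    obtain ⟨u, v, hui, hvi, rfl⟩ := hdecomp p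
    rw [map_add, map_mul, TensorProduct.tmul_add]
    refine Submodule.add_mem _ ?_ ?_
    · have h6 := hmove u hui 1
      rw [mul_one] at h6
      rw [h6]
      exact Submodule.smul_mem _ _ hu1
    · rw [show algebraMap (MvPolynomial (Fin n) K) (FractionRing (MvPolynomial (Fin n) K)) (linP δ) * algebraMap (MvPolynomial (Fin n) K) (FractionRing (MvPolynomial (Fin n) K)) v
        = algebraMap (MvPolynomial (Fin n) K) (FractionRing (MvPolynomial (Fin n) K)) v * δQ by rw [hδQ]; ring]
      rw [hmove v hvi δQ]
      exact Submodule.smul_mem _ _ hw1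
  have hQ0 : ∀ y : FractionRing (MvPolynomial (Fin n) K), (1 : FractionRing (MvPolynomial (Fin n) K)) ⊗ₜ[↥(invs π s)] y ∈ Submodule.span (FractionRing (MvPolynomial (Fin n) K)) {aa, bb} := by
    intro y
    obtain ⟨p, q, hq, hy⟩ := IsFractionRing.div_surjective (A := MvPolynomial (Fin n) K) y
    have hq0 : q ≠ 0 := by
      rw [← mem_nonZeroDivisors_iff_ne_zero]
      exact hq
    have hqQ : algebraMap (MvPolynomial (Fin n) K) (FractionRing (MvPolynomial (Fin n) K)) q ≠ 0 := by
      intro h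
      exact hq0 (hφinj (by rw [h, map_zero]))
    have hsq0 : actR π s q ≠ 0 := by
      intro h
      apply hq0
      apply hsinj
      rw [h, map_zero]
    have hsqQ : algebraMap (MvPolynomial (Fin n) K) (FractionRing (MvPolynomial (Fin n) K)) (actR π s q) ≠ 0 := by
      intro h
      exact hsq0 (hφinj (by rw [h, map_zero]))
    have hN : actR π s (q * actR π s q) = q * actR π s q := by
      rw [map_mul, hinv]
      ring
    have hNQ : algebraMap (MvPolynomial (Fin n) K) (FractionRing (MvPolynomial (Fin n) K)) (q * actR π s q) ≠ 0 := by
      rw [map_mul]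
      exact mul_ne_zero hqQ hsqQ
    have h7 : algebraMap (MvPolynomial (Fin n) K) (FractionRing (MvPolynomial (Fin n) K)) (q * actR π s q) * y
        = algebraMap (MvPolynomial (Fin n) K) (FractionRing (MvPolynomial (Fin n) K)) (p * actR π s q) := by
      rw [map_mul, map_mul, ← hy]
      field_simp
    have h8 : (1 : FractionRing (MvPolynomial (Fin n) K)) ⊗ₜ[↥(invs π s)] y = (algebraMap (MvPolynomial (Fin n) K) (FractionRing (MvPolynomial (Fin n) K)) (q * actR π s q))⁻¹ •
        ((1 : FractionRing (MvPolynomial (Fin n) K)) ⊗ₜ[↥(invs π s)] (algebraMap (MvPolynomial (Fin n) K) (FractionRing (MvPolynomial (Fin n) K)) (p * actR π s q))) := by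
      rw [← h7, hmove (q * actR π s q) hN y, smul_smul, inv_mul_cancel₀ hNQ, one_smul]
    rw [h8]
    exact Submodule.smul_mem _ _ (hR0 _)
  have hspan : ∀ m : (FractionRing (MvPolynomial (Fin n) K)) ⊗[↥(invs π s)] (FractionRing (MvPolynomial (Fin n) K)), m ∈ Submodule.span (FractionRing (MvPolynomial (Fin n) K)) {aa, bb} := by
    intro m
    induction m using TensorProduct.induction_on with
    | zero => exact Submodule.zero_mem _
    | tmul x y =>
        have h9 : x ⊗ₜ[↥(invs π s)] y = x • ((1 : FractionRing (MvPolynomial (Fin n) K)) ⊗ₜ[↥(invs π s)] y) := by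
          rw [TensorProduct.smul_tmul', smul_eq_mul, mul_one]
        rw [h9]
        exact Submodule.smul_mem _ _ (hQ0 y)
    | add x y hx hy => exact Submodule.add_mem _ hx hy
  have hcoeff : ∀ c d : FractionRing (MvPolynomial (Fin n) K), μ (c • aa + d • bb) = c * αQ := by
    intro c d
    rw [map_add, hμsmul, hμsmul, hμa, hμb, mul_zero, add_zero]
  have hcoeffs : ∀ c d : FractionRing (MvPolynomial (Fin n) K), μs (c • aa + d • bb) = d * αQ := by
    intro c d
    rw [map_add, hμssmul, hμssmul, hμsa, hμsb, mul_zero, zero_add]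
  constructor
  · intro m
    obtain ⟨c, d, hcd⟩ := Submodule.mem_span_pair.mp (hspan m)
    refine ⟨(c, d), hcd.symm, ?_⟩
    rintro ⟨c', d'⟩ h'
    have h2 : c' • aa + d' • bb = c • aa + d • bb := by rw [← h', hcd]
    have hc : c' = c := by
      have h3 := congrArg μ h2
      rw [hcoeff, hcoeff] at h3
      exact mul_right_cancel₀ hαQne h3
    have hd : d' = d := by
      have h3 := congrArg μs h2
      rw [hcoeffs, hcoeffs] at h3
      exact mul_right_cancel₀ hαQne h3
    rw [Prod.mk.injEq]
    exact ⟨hc, hd⟩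
  · intro f
    have hzero : ∀ m : (FractionRing (MvPolynomial (Fin n) K)) ⊗[↥(invs π s)] (FractionRing (MvPolynomial (Fin n) K)), μ m = 0 → μs m = 0 → m = 0 := by
      intro m h1 h2
      obtain ⟨c, d, hcd⟩ := Submodule.mem_span_pair.mp (hspan m)
      rw [← hcd] at h1 h2 ⊢
      rw [hcoeff] at h1
      rw [hcoeffs] at h2
      have hc : c = 0 := (mul_eq_zero.mp h1).resolve_right hαQne
      have hd : d = 0 := (mul_eq_zero.mp h2).resolve_right hαQne
      rw [hc, hd, zero_smul, zero_smul, add_zero]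
    have hsub : ∀ m₁ m₂ : (FractionRing (MvPolynomial (Fin n) K)) ⊗[↥(invs π s)] (FractionRing (MvPolynomial (Fin n) K)), μ m₁ = μ m₂ → μs m₁ = μs m₂ → m₁ = m₂ := by
      intro m₁ m₂ e1 e2
      have h10 := hzero (m₁ - m₂) (by rw [map_sub, e1, sub_self]) (by rw [map_sub, e2, sub_self])
      exact sub_eq_zero.mp h10
    have hrm : ∀ q x y : FractionRing (MvPolynomial (Fin n) K), rmulQ π s q (x ⊗ₜ[↥(invs π s)] y) = x ⊗ₜ[↥(invs π s)] (q * y) := by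
      intro q x y
      rw [rmulQ]
      exact LinearMap.lTensor_tmul (M := FractionRing (MvPolynomial (Fin n) K)) (LinearMap.mulLeft (↥(invs π s)) q) x y
    set fQ : FractionRing (MvPolynomial (Fin n) K) := algebraMap (MvPolynomial (Fin n) K) (FractionRing (MvPolynomial (Fin n) K)) f with hfQ
    set sfQ : FractionRing (MvPolynomial (Fin n) K) := algebraMap (MvPolynomial (Fin n) K) (FractionRing (MvPolynomial (Fin n) K)) (actR π s f) with hsfQ
    have hsQf : sQ fQ = sfQ := by rw [hfQ, hsQφ, hsfQ]
    constructor
    · apply hsub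
      · rw [map_sub, hrm, hrm, map_sub, hμ, hμ, hμsmul, hμa, ← hαQ]
        ring
      · rw [map_sub, hrm, hrm, map_sub, hμs, hμs, hμssmul, hμsa, map_mul, map_mul,
          hsQf, hsQsδ, map_one, mul_zero]
        ring
    · apply hsub
      · rw [map_sub, hrm, hrm, map_sub, hμ, hμ, hμsmul, hμb, mul_zero]
        ring
      · rw [map_sub, hrm, hrm, map_sub, hμs, hμs, hμssmul, hμsb, map_mul, map_mul,
          hsQf, hsQδ, map_one, ← hαQ]
        ring

end key

/-- In `B_s ⊗_R Q ≅ Q ⊗_{R^s} Q`, the elements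
`a = δ_s ⊗ 1 − 1 ⊗ s(δ_s)` and `b = δ_s ⊗ 1 − 1 ⊗ δ_s` span complementary `Q`-subbimodules,
`B_s ⊗_R Q = Q·a ⊕ Q·b`, where the right `R`-action on `Q·a` equals the left action and on
`Q·b` equals the left action twisted by `s`. -/
theorem statement13 {B W : Type} [Group W] [Finite B] {M : CoxeterMatrix B}
    (cs : CoxeterSystem M W)
    (K : Type) [CommRing K] [IsDomain K] [IsNoetherianRing K] (n : ℕ)
    (π : Representation K W (Fin n → K))
    (α : B → (Fin n → K)) (cα : B → ((Fin n → K) →ₗ[K] K))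
    (h2 : ∀ i : B, cα i (α i) = 2)
    (hrefl : ∀ (i : B) (v : Fin n → K), π (cs.simple i) v = v - cα i v • α i)
    (hsurj : ∀ i : B, Function.Surjective (cα i))
    (hne : ∀ i : B, α i ≠ 0)
    (i : B) (δ : Fin n → K) (hδ : cα i δ = 1) :
    letI R := MvPolynomial (Fin n) K
    letI Q := FractionRing R
    letI s := cs.simple i
    letI δQ : Q := algebraMap R Q (linP δ)
    letI sδQ : Q := algebraMap R Q (actR π s (linP δ))
    letI a : Q ⊗[↥(invs π s)] Q := δQ ⊗ₜ 1 - 1 ⊗ₜ sδQ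
    letI b : Q ⊗[↥(invs π s)] Q := δQ ⊗ₜ 1 - 1 ⊗ₜ δQ
    (∀ m : Q ⊗[↥(invs π s)] Q, ∃! c : Q × Q, m = c.1 • a + c.2 • b) ∧
      (∀ f : MvPolynomial (Fin n) K,
        rmulQ π s (algebraMap R Q f) a = algebraMap R Q f • a ∧
          rmulQ π s (algebraMap R Q f) b = algebraMap R Q (actR π s f) • b) := by
  exact key13 π (cs.simple i) (cs.simple_mul_simple_self i) (α i) (cα i)
    (hrefl i) (h2 i) (hne i) δ hδ
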